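/- For W(r,x) defined by W = (√r (4-r²)^{3/2}/(2(4+r²)))·(2rV(r,x) - (4-r²)V_r(r,x)), where V is C³ on (0,2)×ℝ, and for the operator L(W) = W_{ξξ} + W_{xx} - P(ξ)W expressed in the r-variable via ξ = log((2+r)/(2-r)), one has the identity -32(4+r²)²/(√r(4-r²)^{5/2}) · L(W) = ∂_r E(V) - (16r/(16-r⁴)) E(V), where E(V) = (r²+4)[(4-r²)²V_{rr} + 16V_{xx}] - (5r⁴+48r²-16)(4-r²)V_r/r + 4(r⁴+16r²-16)V. -/

import Mathlib

noncomputable def P (ξ : ℝ) : ℝ :=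
  (Real.exp (4 * ξ) + 10 * Real.exp (2 * ξ) + 1) / (4 * (Real.exp (2 * ξ) - 1) ^ 2)

/-- The operator `E(V)`. -/
noncomputable def EOp (V : ℝ → ℝ → ℝ) (r x : ℝ) : ℝ :=
  (r ^ 2 + 4) * ((4 - r ^ 2) ^ 2 * deriv (deriv (fun s => V s x)) r +
      16 * deriv (deriv (fun t => V r t)) x) -
  (5 * r ^ 4 + 48 * r ^ 2 - 16) * (4 - r ^ 2) * (deriv (fun s => V s x) r) / r +
  4 * (r ^ 4 + 16 * r ^ 2 - 16) * V r x

/-- `W = (√r (4-r²)^{3/2}/(2(4+r²)))·(2rV - (4-r²)V_r)`. -/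
noncomputable def Wof (V : ℝ → ℝ → ℝ) (r x : ℝ) : ℝ :=
  (Real.sqrt r * (4 - r ^ 2) ^ ((3 : ℝ) / 2) / (2 * (4 + r ^ 2))) *
    (2 * r * V r x - (4 - r ^ 2) * deriv (fun s => V s x) r)

/-- `L(W) = W_{ξξ} + W_{xx} - P(ξ)W` written in the `r`-variable via
`ξ = log((2+r)/(2-r))`, so `W_{ξξ} = ((4-r²)/4)∂_r(((4-r²)/4)∂_r W)`. -/
noncomputable def LOp (W : ℝ → ℝ → ℝ) (r x : ℝ) : ℝ :=
  ((4 - r ^ 2) / 4) * deriv (fun s => ((4 - s ^ 2) / 4) * deriv (fun u => W u x) s) r +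
    deriv (deriv (fun t => W r t)) x - P (Real.log ((2 + r) / (2 - r))) * W r x

/-- For `V` of class `C³` one has
`-32(4+r²)²/(√r (4-r²)^{5/2}) · L(W) = ∂_r E(V) - (16r/(16-r⁴)) E(V)` on `(0,2) × ℝ`. -/

lemma hasDerivAt_comp_snd {φ : ℝ × ℝ → ℝ} {s t : ℝ} (hφ : DifferentiableAt ℝ φ (s, t)) :
    HasDerivAt (fun t' => φ (s, t')) (fderiv ℝ φ (s, t) (0, 1)) t :=
  hφ.hasFDerivAt.comp_hasDerivAt t ((hasDerivAt_const t s).prodMk (hasDerivAt_id' t))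

lemma hasDerivAt_comp_fst {φ : ℝ × ℝ → ℝ} {s t : ℝ} (hφ : DifferentiableAt ℝ φ (s, t)) :
    HasDerivAt (fun s' => φ (s', t)) (fderiv ℝ φ (s, t) (1, 0)) s :=
  hφ.hasFDerivAt.comp_hasDerivAt s ((hasDerivAt_id' s).prodMk (hasDerivAt_const s t))

lemma fderiv_clm_apply_const {φ : ℝ × ℝ → ℝ} (hφ : ContDiff ℝ 2 φ) (q w u : ℝ × ℝ) :
    fderiv ℝ (fun p => fderiv ℝ φ p w) q u = fderiv ℝ (fderiv ℝ φ) q u w := by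
  have hd : DifferentiableAt ℝ (fderiv ℝ φ) q :=
    ((hφ.fderiv_right (m := 1) (by norm_num)).differentiable one_ne_zero) q
  have h : HasFDerivAt (⇑(ContinuousLinearMap.apply ℝ ℝ w) ∘ fderiv ℝ φ)
      ((ContinuousLinearMap.apply ℝ ℝ w).comp (fderiv ℝ (fderiv ℝ φ) q)) q :=
    (ContinuousLinearMap.apply ℝ ℝ w).hasFDerivAt.comp q hd.hasFDerivAt
  have e : (fun p => fderiv ℝ φ p w) = (⇑(ContinuousLinearMap.apply ℝ ℝ w) ∘ fderiv ℝ φ) := rfl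
  rw [e, h.fderiv]; rfl

lemma symm2 {φ : ℝ × ℝ → ℝ} (hφ : ContDiff ℝ 2 φ) (q v w : ℝ × ℝ) :
    fderiv ℝ (fderiv ℝ φ) q v w = fderiv ℝ (fderiv ℝ φ) q w v :=
  second_derivative_symmetric (fun y => ((hφ.differentiable two_ne_zero) y).hasFDerivAt)
    (((hφ.fderiv_right (m := 1) (by norm_num)).differentiable one_ne_zero q).hasFDerivAt) v w

section TwoVar

variable {V : ℝ → ℝ → ℝ}

-- abbreviations (defeq)
-- F = fun p : ℝ × ℝ => V p.1 p.2
-- G1 = fun p => fderiv ℝ F p (1,0), G2 = fun p => fderiv ℝ F p (0,1)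

lemma g_eq (hV : ContDiff ℝ 3 fun p : ℝ × ℝ => V p.1 p.2) (x : ℝ) :
    (fun s => deriv (deriv (fun t => V s t)) x)
      = (fun s => fderiv ℝ (fun p : ℝ × ℝ =>
          fderiv ℝ (fun q : ℝ × ℝ => V q.1 q.2) p (0, 1)) (s, x) (0, 1)) := by
  have hG2c : ContDiff ℝ 2 (fun p : ℝ × ℝ => fderiv ℝ (fun q : ℝ × ℝ => V q.1 q.2) p (0, 1)) :=
    (hV.fderiv_right (by norm_num)).clm_apply contDiff_const
  funext s
  have h1 : deriv (fun t => V s t)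
      = fun t => fderiv ℝ (fun q : ℝ × ℝ => V q.1 q.2) (s, t) (0, 1) :=
    funext fun t => (hasDerivAt_comp_snd ((hV.differentiable (by norm_num)) (s, t))).deriv
  rw [h1]
  exact (hasDerivAt_comp_snd ((hG2c.differentiable two_ne_zero) (s, x))).deriv

lemma g_contDiff (hV : ContDiff ℝ 3 fun p : ℝ × ℝ => V p.1 p.2) (x : ℝ) :
    ContDiff ℝ 1 (fun s => deriv (deriv (fun t => V s t)) x) := by
  rw [g_eq hV x]
  have hG2c : ContDiff ℝ 2 (fun p : ℝ × ℝ => fderiv ℝ (fun q : ℝ × ℝ => V q.1 q.2) p (0, 1)) :=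
    (hV.fderiv_right (by norm_num)).clm_apply contDiff_const
  exact ((hG2c.fderiv_right (by norm_num)).clm_apply contDiff_const).comp
    (contDiff_id.prodMk contDiff_const)

lemma deriv_g_eq (hV : ContDiff ℝ 3 fun p : ℝ × ℝ => V p.1 p.2) (r x : ℝ) :
    deriv (fun s => deriv (deriv (fun t => V s t)) x) r
      = fderiv ℝ (fun p : ℝ × ℝ =>
          fderiv ℝ (fun q : ℝ × ℝ => fderiv ℝ (fun q : ℝ × ℝ => V q.1 q.2) q (0, 1)) p (0, 1))
          (r, x) (1, 0) := by
  rw [g_eq hV x]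
  have hG2c : ContDiff ℝ 2 (fun p : ℝ × ℝ => fderiv ℝ (fun q : ℝ × ℝ => V q.1 q.2) p (0, 1)) :=
    (hV.fderiv_right (by norm_num)).clm_apply contDiff_const
  have hG2'c : ContDiff ℝ 1 (fun p : ℝ × ℝ =>
      fderiv ℝ (fun q : ℝ × ℝ => fderiv ℝ (fun q : ℝ × ℝ => V q.1 q.2) q (0, 1)) p (0, 1)) :=
    (hG2c.fderiv_right (by norm_num)).clm_apply contDiff_const
  exact (hasDerivAt_comp_fst ((hG2'c.differentiable one_ne_zero) (r, x))).deriv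



lemma clairaut (hV : ContDiff ℝ 3 fun p : ℝ × ℝ => V p.1 p.2) (r x : ℝ) :
    fderiv ℝ (fun p : ℝ × ℝ =>
        fderiv ℝ (fun q : ℝ × ℝ => fderiv ℝ (fun q : ℝ × ℝ => V q.1 q.2) q (1, 0)) p (0, 1))
        (r, x) (0, 1)
      = deriv (fun s => deriv (deriv (fun t => V s t)) x) r := by
  rw [deriv_g_eq hV r x]
  have hF2 : ContDiff ℝ 2 (fun q : ℝ × ℝ => V q.1 q.2) := hV.of_le (by norm_num)
  have hG2c : ContDiff ℝ 2 (fun p : ℝ × ℝ => fderiv ℝ (fun q : ℝ × ℝ => V q.1 q.2) p (0, 1)) :=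
    (hV.fderiv_right (by norm_num)).clm_apply contDiff_const
  have h12 : (fun p : ℝ × ℝ =>
      fderiv ℝ (fun q : ℝ × ℝ => fderiv ℝ (fun q : ℝ × ℝ => V q.1 q.2) q (1, 0)) p (0, 1))
      = (fun p : ℝ × ℝ =>
      fderiv ℝ (fun q : ℝ × ℝ => fderiv ℝ (fun q : ℝ × ℝ => V q.1 q.2) q (0, 1)) p (1, 0)) := by
    funext p
    rw [fderiv_clm_apply_const hF2 p (1, 0) (0, 1), symm2 hF2 p (0, 1) (1, 0),
      ← fderiv_clm_apply_const hF2 p (0, 1) (1, 0)]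
  rw [h12, fderiv_clm_apply_const hG2c (r, x) (1, 0) (0, 1), symm2 hG2c (r, x) (0, 1) (1, 0),
    ← fderiv_clm_apply_const hG2c (r, x) (0, 1) (1, 0)]

lemma Wxx_eq (hV : ContDiff ℝ 3 fun p : ℝ × ℝ => V p.1 p.2) (r x : ℝ) :
    deriv (deriv (fun t => Wof V r t)) x =
      Real.sqrt r * (4 - r ^ 2) ^ ((3 : ℝ) / 2) / (2 * (4 + r ^ 2)) *
        (2 * r * deriv (deriv (fun t => V r t)) x -
          (4 - r ^ 2) * deriv (fun s => deriv (deriv (fun t => V s t)) x) r) := by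
  have hFd : Differentiable ℝ (fun q : ℝ × ℝ => V q.1 q.2) := hV.differentiable (by norm_num)
  have hG1c : ContDiff ℝ 2 (fun p : ℝ × ℝ => fderiv ℝ (fun q : ℝ × ℝ => V q.1 q.2) p (1, 0)) :=
    (hV.fderiv_right (by norm_num)).clm_apply contDiff_const
  have hG2c : ContDiff ℝ 2 (fun p : ℝ × ℝ => fderiv ℝ (fun q : ℝ × ℝ => V q.1 q.2) p (0, 1)) :=
    (hV.fderiv_right (by norm_num)).clm_apply contDiff_const
  have hG12c : ContDiff ℝ 1 (fun p : ℝ × ℝ => fderiv ℝ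
      (fun q : ℝ × ℝ => fderiv ℝ (fun q : ℝ × ℝ => V q.1 q.2) q (1, 0)) p (0, 1)) :=
    (hG1c.fderiv_right (by norm_num)).clm_apply contDiff_const
  have step1 : (fun t => Wof V r t) = fun t =>
      Real.sqrt r * (4 - r ^ 2) ^ ((3 : ℝ) / 2) / (2 * (4 + r ^ 2)) *
        (2 * r * V r t - (4 - r ^ 2) *
          fderiv ℝ (fun q : ℝ × ℝ => V q.1 q.2) (r, t) (1, 0)) := by
    funext t
    have h : deriv (fun s => V s t) r = fderiv ℝ (fun q : ℝ × ℝ => V q.1 q.2) (r, t) (1, 0) :=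
      (hasDerivAt_comp_fst (hFd (r, t))).deriv
    simp only [Wof]; rw [h]
  have step2 : deriv (fun t => Wof V r t) = fun t =>
      Real.sqrt r * (4 - r ^ 2) ^ ((3 : ℝ) / 2) / (2 * (4 + r ^ 2)) *
        (2 * r * fderiv ℝ (fun q : ℝ × ℝ => V q.1 q.2) (r, t) (0, 1) - (4 - r ^ 2) *
          fderiv ℝ (fun q : ℝ × ℝ => fderiv ℝ (fun q : ℝ × ℝ => V q.1 q.2) q (1, 0))
            (r, t) (0, 1)) := by
    rw [step1]; funext t
    have h1 : HasDerivAt (fun t' => V r t')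
        (fderiv ℝ (fun q : ℝ × ℝ => V q.1 q.2) (r, t) (0, 1)) t :=
      hasDerivAt_comp_snd (hFd (r, t))
    have h2 : HasDerivAt (fun t' =>
          fderiv ℝ (fun q : ℝ × ℝ => V q.1 q.2) (r, t') (1, 0))
        (fderiv ℝ (fun q : ℝ × ℝ => fderiv ℝ (fun q : ℝ × ℝ => V q.1 q.2) q (1, 0))
          (r, t) (0, 1)) t :=
      hasDerivAt_comp_snd ((hG1c.differentiable two_ne_zero) (r, t))
    exact (((h1.const_mul (2 * r)).sub (h2.const_mul (4 - r ^ 2))).const_mul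
      (Real.sqrt r * (4 - r ^ 2) ^ ((3 : ℝ) / 2) / (2 * (4 + r ^ 2)))).deriv
  rw [step2]
  have h3 : HasDerivAt (fun t => fderiv ℝ (fun q : ℝ × ℝ => V q.1 q.2) (r, t) (0, 1))
      (fderiv ℝ (fun p : ℝ × ℝ => fderiv ℝ (fun q : ℝ × ℝ => V q.1 q.2) p (0, 1))
        (r, x) (0, 1)) x :=
    hasDerivAt_comp_snd ((hG2c.differentiable two_ne_zero) (r, x))
  have h4 : HasDerivAt (fun t =>
        fderiv ℝ (fun q : ℝ × ℝ => fderiv ℝ (fun q : ℝ × ℝ => V q.1 q.2) q (1, 0)) (r, t) (0, 1))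
      (fderiv ℝ (fun p : ℝ × ℝ =>
          fderiv ℝ (fun q : ℝ × ℝ => fderiv ℝ (fun q : ℝ × ℝ => V q.1 q.2) q (1, 0)) p (0, 1))
        (r, x) (0, 1)) x :=
    hasDerivAt_comp_snd ((hG12c.differentiable one_ne_zero) (r, x))
  refine Eq.trans (((h3.const_mul (2 * r)).sub (h4.const_mul (4 - r ^ 2))).const_mul
      (Real.sqrt r * (4 - r ^ 2) ^ ((3 : ℝ) / 2) / (2 * (4 + r ^ 2)))).deriv ?_
  rw [clairaut hV r x]
  have h5 : fderiv ℝ (fun p : ℝ × ℝ => fderiv ℝ (fun q : ℝ × ℝ => V q.1 q.2) p (0, 1))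
      (r, x) (0, 1) = deriv (deriv (fun t => V r t)) x := (congrFun (g_eq hV x) r).symm
  rw [h5]

end TwoVar



lemma L1 (f : ℝ → ℝ) (hf1 : Differentiable ℝ f) (hf2 : Differentiable ℝ (deriv f))
    (s : ℝ) (hs : s ∈ Set.Ioo (0:ℝ) 2) :
    HasDerivAt (fun u => Real.sqrt u * (4 - u ^ 2) ^ ((3 : ℝ) / 2) / (2 * (4 + u ^ 2)) *
        (2 * u * f u - (4 - u ^ 2) * deriv f u))
      (Real.sqrt s * (4 - s ^ 2) ^ ((1 : ℝ) / 2) *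
        ((((96) * s + (-80) * s ^ 3 + (-10) * s ^ 5) * (f s)
          + ((-64) + (304) * s ^ 2 + (-28) * s ^ 4 + (-11) * s ^ 6) * (deriv f s)
          + ((-128) * s + (32) * s ^ 3 + (8) * s ^ 5 + (-2) * s ^ 7) * (deriv (deriv f) s))
        / ((64) * s + (32) * s ^ 3 + (4) * s ^ 5))) s := by
  obtain ⟨hs0, hs2⟩ := hs
  have h4s : (0:ℝ) < 4 - s ^ 2 := by nlinarith
  have hbase : HasDerivAt (fun u : ℝ => 4 - u ^ 2) (0 - (2:ℕ) * s ^ (2-1)) s :=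
    (hasDerivAt_const s 4).sub (hasDerivAt_pow 2 s)
  have hA := ((Real.hasDerivAt_sqrt hs0.ne').mul
      (hbase.rpow_const (p := (3:ℝ)/2) (Or.inl h4s.ne'))).div
      (((hasDerivAt_pow 2 s).const_add 4).const_mul 2) (by positivity)
  have hB := (((hasDerivAt_id' (x := s)).const_mul 2).mul (hf1 s).hasDerivAt).sub
      (hbase.mul (hf2 s).hasDerivAt)
  have hAB := hA.mul hB
  convert hAB using 1
  · rfl
  · rfl
  · rfl
  simp only [Pi.mul_apply, Pi.add_apply, Pi.sub_apply, Pi.div_apply, Pi.pow_apply]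
  rw [show (3:ℝ)/2 - 1 = (1:ℝ)/2 by norm_num]
  have e32 : (4 - s ^ 2) ^ ((3:ℝ)/2) = (4 - s ^ 2) * (4 - s ^ 2) ^ ((1:ℝ)/2) := by
    rw [show (3:ℝ)/2 = 1 + (1:ℝ)/2 by norm_num, Real.rpow_add h4s, Real.rpow_one]
  rw [e32]
  obtain ⟨u, hu0, rfl⟩ : ∃ u : ℝ, 0 < u ∧ s = u ^ 2 :=
    ⟨Real.sqrt s, Real.sqrt_pos.mpr hs0, (Real.sq_sqrt hs0.le).symm⟩
  rw [Real.sqrt_sq hu0.le]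
  have hu' : u ≠ 0 := ne_of_gt hu0
  have hd1 : (2:ℝ) * (4 + (u ^ 2) ^ 2) ≠ 0 := by positivity
  have hd2 : (64:ℝ) * u ^ 2 + 32 * (u ^ 2) ^ 3 + 4 * (u ^ 2) ^ 5 ≠ 0 := by positivity
  field_simp
  ring


set_option maxHeartbeats 1000000 in
lemma L3 (f : ℝ → ℝ) (hf1 : Differentiable ℝ f) (hf2 : Differentiable ℝ (deriv f))
    (hf3 : Differentiable ℝ (deriv (deriv f)))
    (r : ℝ) (hr : r ∈ Set.Ioo (0:ℝ) 2) :
    HasDerivAt (fun s => (4 - s ^ 2) / 4 * (Real.sqrt s * (4 - s ^ 2) ^ ((1 : ℝ) / 2) *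
        ((((96) * s + (-80) * s ^ 3 + (-10) * s ^ 5) * (f s)
          + ((-64) + (304) * s ^ 2 + (-28) * s ^ 4 + (-11) * s ^ 6) * (deriv f s)
          + ((-128) * s + (32) * s ^ 3 + (8) * s ^ 5 + (-2) * s ^ 7) * (deriv (deriv f) s))
        / ((64) * s + (32) * s ^ 3 + (4) * s ^ 5))))
      (Real.sqrt r * (4 - r ^ 2) ^ ((1 : ℝ) / 2) *
        ((((1536) * r + (-11776) * r ^ 3 + (3136) * r ^ 5 + (800) * r ^ 7 + (70) * r ^ 9) * (f r)
          + ((1024) + (21248) * r ^ 2 + (-22912) * r ^ 4 + (-1184) * r ^ 6 + (916) * r ^ 8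
              + (119) * r ^ 10) * (deriv f r)
          + ((-4096) * r + (19456) * r ^ 3 + (-1536) * r ^ 5 + (-1920) * r ^ 7 + (112) * r ^ 9
              + (44) * r ^ 11) * (deriv (deriv f) r)
          + ((-4096) * r ^ 2 + (1024) * r ^ 4 + (512) * r ^ 6 + (-128) * r ^ 8 + (-16) * r ^ 10
              + (4) * r ^ 12) * (deriv (deriv (deriv f)) r))
        / ((2048) * r ^ 2 + (1536) * r ^ 4 + (384) * r ^ 6 + (32) * r ^ 8))) r := by
  obtain ⟨hr0, hr2⟩ := hr
  have h4 : (0:ℝ) < 4 - r ^ 2 := by nlinarith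
  have hbase : HasDerivAt (fun u : ℝ => 4 - u ^ 2) (0 - (2:ℕ) * r ^ (2-1)) r :=
    (hasDerivAt_const r 4).sub (hasDerivAt_pow 2 r)
  have hp1 := (((hasDerivAt_id' (x := r)).const_mul (96:ℝ)).add
      ((hasDerivAt_pow 3 r).const_mul (-80))).add ((hasDerivAt_pow 5 r).const_mul (-10))
  have hp2 := (((hasDerivAt_const r (-64:ℝ)).add ((hasDerivAt_pow 2 r).const_mul 304)).add
      ((hasDerivAt_pow 4 r).const_mul (-28))).add ((hasDerivAt_pow 6 r).const_mul (-11))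
  have hp3 := ((((hasDerivAt_id' (x := r)).const_mul (-128:ℝ)).add
      ((hasDerivAt_pow 3 r).const_mul 32)).add ((hasDerivAt_pow 5 r).const_mul 8)).add
      ((hasDerivAt_pow 7 r).const_mul (-2))
  have hden := (((hasDerivAt_id' (x := r)).const_mul (64:ℝ)).add
      ((hasDerivAt_pow 3 r).const_mul 32)).add ((hasDerivAt_pow 5 r).const_mul 4)
  have hdenne : (64:ℝ) * r + 32 * r ^ 3 + 4 * r ^ 5 ≠ 0 := by
    have h3 := pow_pos hr0 3; have h5 := pow_pos hr0 5; nlinarith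
  have hnum := ((hp1.mul (hf1 r).hasDerivAt).add (hp2.mul (hf2 r).hasDerivAt)).add
      (hp3.mul (hf3 r).hasDerivAt)
  have hY := hnum.div hden hdenne
  have hout := (hbase.div_const 4).mul (((Real.hasDerivAt_sqrt hr0.ne').mul
      (hbase.rpow_const (p := (1:ℝ)/2) (Or.inl h4.ne'))).mul hY)
  convert hout using 1
  · rfl
  · rfl
  · rfl
  simp only [Pi.mul_apply, Pi.add_apply, Pi.sub_apply, Pi.div_apply, Pi.pow_apply]
  rw [show (1:ℝ)/2 - 1 = (1:ℝ)/2 + (-1) by norm_num, Real.rpow_add h4, Real.rpow_neg_one]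
  obtain ⟨u, hu0, rfl⟩ : ∃ u : ℝ, 0 < u ∧ r = u ^ 2 :=
    ⟨Real.sqrt r, Real.sqrt_pos.mpr hr0, (Real.sq_sqrt hr0.le).symm⟩
  rw [Real.sqrt_sq hu0.le]
  have hu' : u ≠ 0 := ne_of_gt hu0
  have hd2 : (64:ℝ) * u ^ 2 + 32 * (u ^ 2) ^ 3 + 4 * (u ^ 2) ^ 5 ≠ 0 := by positivity
  have hd3 : (2048:ℝ) * (u ^ 2) ^ 2 + 1536 * (u ^ 2) ^ 4 + 384 * (u ^ 2) ^ 6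
      + 32 * (u ^ 2) ^ 8 ≠ 0 := by positivity
  have h4' : (4:ℝ) - u ^ 4 ≠ 0 := by rw [show u ^ 4 = (u ^ 2) ^ 2 by ring]; exact h4.ne'
  field_simp
  ring

lemma L4 (f g : ℝ → ℝ) (hf1 : Differentiable ℝ f) (hf2 : Differentiable ℝ (deriv f))
    (hf3 : Differentiable ℝ (deriv (deriv f))) (hg1 : Differentiable ℝ g)
    (r : ℝ) (hr : r ∈ Set.Ioo (0:ℝ) 2) :
    HasDerivAt (fun s => (s ^ 2 + 4) * ((4 - s ^ 2) ^ 2 * deriv (deriv f) s + 16 * g s) -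
        (5 * s ^ 4 + 48 * s ^ 2 - 16) * (4 - s ^ 2) * deriv f s / s +
        4 * (s ^ 4 + 16 * s ^ 2 - 16) * f s)
      ((((128) * r ^ 3 + (16) * r ^ 5) * (f r)
          + ((-64) + (-272) * r ^ 2 + (148) * r ^ 4 + (29) * r ^ 6) * (deriv f r)
          + ((64) * r + (-240) * r ^ 3 + (12) * r ^ 5 + (11) * r ^ 7) * (deriv (deriv f) r)
          + ((64) * r ^ 2 + (-16) * r ^ 4 + (-4) * r ^ 6 + (1) * r ^ 8)
              * (deriv (deriv (deriv f)) r)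
          + ((32) * r ^ 3) * (g r)
          + ((64) * r ^ 2 + (16) * r ^ 4) * (deriv g r)) / (r ^ 2)) r := by
  obtain ⟨hr0, hr2⟩ := hr
  have hbase : HasDerivAt (fun u : ℝ => 4 - u ^ 2) (0 - (2:ℕ) * r ^ (2-1)) r :=
    (hasDerivAt_const r 4).sub (hasDerivAt_pow 2 r)
  have t1 := ((hasDerivAt_pow 2 r).add_const 4).mul
      (((hbase.pow 2).mul (hf3 r).hasDerivAt).add ((hg1 r).hasDerivAt.const_mul 16))
  have t2 := (((((hasDerivAt_pow 4 r).const_mul (5:ℝ)).add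
      ((hasDerivAt_pow 2 r).const_mul 48)).sub_const 16).mul hbase).mul
      (hf2 r).hasDerivAt |>.div (hasDerivAt_id' (x := r)) hr0.ne'
  have t3 := (((hasDerivAt_pow 4 r).add ((hasDerivAt_pow 2 r).const_mul 16)).sub_const
      16).const_mul (4:ℝ) |>.mul (hf1 r).hasDerivAt
  have tot := (t1.sub t2).add t3
  convert tot using 1
  · rfl
  · rfl
  · rfl
  simp only [Pi.mul_apply, Pi.add_apply, Pi.sub_apply, Pi.div_apply, Pi.pow_apply]
  field_simp
  ring

lemma Peval (r : ℝ) (hr : r ∈ Set.Ioo (0:ℝ) 2) :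
    P (Real.log ((2 + r) / (2 - r))) = (3 * r ^ 4 - 8 * r ^ 2 + 48) / (64 * r ^ 2) := by
  obtain ⟨hr0, hr2⟩ := hr
  have h2p : (0:ℝ) < 2 + r := by linarith
  have h2m : (0:ℝ) < 2 - r := by linarith
  simp only [P]
  rw [show (4:ℝ) * Real.log ((2 + r) / (2 - r)) = Real.log (((2 + r) / (2 - r)) ^ (4:ℕ)) by
      rw [Real.log_pow]; push_cast; ring]
  rw [show (2:ℝ) * Real.log ((2 + r) / (2 - r)) = Real.log (((2 + r) / (2 - r)) ^ (2:ℕ)) by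
      rw [Real.log_pow]; push_cast; ring]
  rw [Real.exp_log (by positivity), Real.exp_log (by positivity)]
  have hq1 : (1:ℝ) < (2 + r) / (2 - r) := by rw [lt_div_iff₀ h2m]; linarith
  have hq2 : (1:ℝ) < ((2 + r) / (2 - r)) ^ 2 := by nlinarith
  have hd : (0:ℝ) < 4 * (((2 + r) / (2 - r)) ^ 2 - 1) ^ 2 := by nlinarith
  rw [div_eq_div_iff hd.ne' (by positivity)]
  field_simp
  ring

set_option maxHeartbeats 2000000 in
lemma oneVar (f g : ℝ → ℝ) (hf : ContDiff ℝ 3 f) (hg : ContDiff ℝ 1 g)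
    (r : ℝ) (hr : r ∈ Set.Ioo (0:ℝ) 2) :
    -32 * (4 + r ^ 2) ^ 2 / (Real.sqrt r * (4 - r ^ 2) ^ ((5 : ℝ) / 2)) *
      ((4 - r ^ 2) / 4 * deriv (fun s => (4 - s ^ 2) / 4 *
          deriv (fun u => Real.sqrt u * (4 - u ^ 2) ^ ((3 : ℝ) / 2) / (2 * (4 + u ^ 2)) *
            (2 * u * f u - (4 - u ^ 2) * deriv f u)) s) r +
        Real.sqrt r * (4 - r ^ 2) ^ ((3 : ℝ) / 2) / (2 * (4 + r ^ 2)) *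
          (2 * r * g r - (4 - r ^ 2) * deriv g r) -
        P (Real.log ((2 + r) / (2 - r))) *
          (Real.sqrt r * (4 - r ^ 2) ^ ((3 : ℝ) / 2) / (2 * (4 + r ^ 2)) *
            (2 * r * f r - (4 - r ^ 2) * deriv f r))) =
      deriv (fun s => (s ^ 2 + 4) * ((4 - s ^ 2) ^ 2 * deriv (deriv f) s + 16 * g s) -
          (5 * s ^ 4 + 48 * s ^ 2 - 16) * (4 - s ^ 2) * deriv f s / s +
          4 * (s ^ 4 + 16 * s ^ 2 - 16) * f s) r -
        16 * r / (16 - r ^ 4) *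
          ((r ^ 2 + 4) * ((4 - r ^ 2) ^ 2 * deriv (deriv f) r + 16 * g r) -
            (5 * r ^ 4 + 48 * r ^ 2 - 16) * (4 - r ^ 2) * deriv f r / r +
            4 * (r ^ 4 + 16 * r ^ 2 - 16) * f r) := by
  obtain ⟨hr0, hr2⟩ := hr
  have h4 : (0:ℝ) < 4 - r ^ 2 := by nlinarith
  have hf1 : Differentiable ℝ f := hf.differentiable (by norm_num)
  have hfd2c : ContDiff ℝ 2 (deriv f) := by
    have h := ContDiff.iterate_deriv' 2 1 (f := f) (by exact_mod_cast hf)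
    simpa using h
  have hf2 : Differentiable ℝ (deriv f) := hfd2c.differentiable two_ne_zero
  have hfdd : ContDiff ℝ 1 (deriv (deriv f)) := by
    have h := ContDiff.iterate_deriv' 1 1 (f := deriv f) (by exact_mod_cast hfd2c)
    simpa using h
  have hf3 : Differentiable ℝ (deriv (deriv f)) := hfdd.differentiable one_ne_zero
  have hg1 : Differentiable ℝ g := hg.differentiable one_ne_zero
  have hfun : (fun s => (4 - s ^ 2) / 4 *
      deriv (fun u => Real.sqrt u * (4 - u ^ 2) ^ ((3 : ℝ) / 2) / (2 * (4 + u ^ 2)) *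
        (2 * u * f u - (4 - u ^ 2) * deriv f u)) s)
      =ᶠ[nhds r] (fun s => (4 - s ^ 2) / 4 * (Real.sqrt s * (4 - s ^ 2) ^ ((1 : ℝ) / 2) *
        ((((96) * s + (-80) * s ^ 3 + (-10) * s ^ 5) * (f s)
          + ((-64) + (304) * s ^ 2 + (-28) * s ^ 4 + (-11) * s ^ 6) * (deriv f s)
          + ((-128) * s + (32) * s ^ 3 + (8) * s ^ 5 + (-2) * s ^ 7) * (deriv (deriv f) s))
        / ((64) * s + (32) * s ^ 3 + (4) * s ^ 5)))) := by
    filter_upwards [isOpen_Ioo.mem_nhds (⟨hr0, hr2⟩ : r ∈ Set.Ioo (0:ℝ) 2)] with t ht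
    rw [(L1 f hf1 hf2 t ht).deriv]
  rw [hfun.deriv_eq, (L3 f hf1 hf2 hf3 r ⟨hr0, hr2⟩).deriv,
    (L4 f g hf1 hf2 hf3 hg1 r ⟨hr0, hr2⟩).deriv, Peval r ⟨hr0, hr2⟩]
  have e52 : (4 - r ^ 2) ^ ((5:ℝ)/2) = (4 - r ^ 2) ^ 2 * (4 - r ^ 2) ^ ((1:ℝ)/2) := by
    rw [show (5:ℝ)/2 = ((2:ℕ):ℝ) + (1:ℝ)/2 by norm_num, Real.rpow_add h4, Real.rpow_natCast]
  have e32 : (4 - r ^ 2) ^ ((3:ℝ)/2) = (4 - r ^ 2) * (4 - r ^ 2) ^ ((1:ℝ)/2) := by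
    rw [show (3:ℝ)/2 = 1 + (1:ℝ)/2 by norm_num, Real.rpow_add h4, Real.rpow_one]
  rw [e52, e32]
  obtain ⟨u, hu0, rfl⟩ : ∃ u : ℝ, 0 < u ∧ r = u ^ 2 :=
    ⟨Real.sqrt r, Real.sqrt_pos.mpr hr0, (Real.sq_sqrt hr0.le).symm⟩
  rw [Real.sqrt_sq hu0.le]
  have hu' : u ≠ 0 := ne_of_gt hu0
  have h16 : (0:ℝ) < 16 - (u ^ 2) ^ 4 := by nlinarith
  have hw : (0:ℝ) < (4 - (u ^ 2) ^ 2) ^ ((1:ℝ)/2) := Real.rpow_pos_of_pos h4 _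
  have h4p : (0:ℝ) < 4 + (u ^ 2) ^ 2 := by positivity
  have h16' : (16:ℝ) - u ^ 8 ≠ 0 := by rw [show u ^ 8 = (u ^ 2) ^ 4 by ring]; exact h16.ne'
  have h4' : (4:ℝ) - u ^ 4 ≠ 0 := by rw [show u ^ 4 = (u ^ 2) ^ 2 by ring]; exact h4.ne'
  have hw' : ((4:ℝ) - u ^ 4) ^ ((1:ℝ)/2) ≠ 0 := by rw [show u ^ 4 = (u ^ 2) ^ 2 by ring]; exact hw.ne'
  have h4p' : (4:ℝ) + u ^ 4 ≠ 0 := by positivity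
  field_simp
  ring

theorem LW_equals_derivative_of_EV (V : ℝ → ℝ → ℝ)
    (hV : ContDiff ℝ 3 (fun p : ℝ × ℝ => V p.1 p.2)) :
    ∀ r ∈ Set.Ioo (0 : ℝ) 2, ∀ x : ℝ,
      (-32 * (4 + r ^ 2) ^ 2 / (Real.sqrt r * (4 - r ^ 2) ^ ((5 : ℝ) / 2))) *
          LOp (Wof V) r x =
        deriv (fun s => EOp V s x) r - (16 * r / (16 - r ^ 4)) * EOp V r x := by
  intro r hr x
  have hf : ContDiff ℝ 3 (fun s : ℝ => V s x) :=
    hV.comp (contDiff_id.prodMk contDiff_const)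
  have hg : ContDiff ℝ 1 (fun s => deriv (deriv (fun t => V s t)) x) := g_contDiff hV x
  have hW2 := Wxx_eq hV r x
  simp only [LOp]
  rw [hW2]
  simp only [EOp, Wof]
  exact oneVar (fun s => V s x) (fun s => deriv (deriv (fun t => V s t)) x) hf hg r hr
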